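/- arXiv:1708.00599 — 2 statements merged into one kernel-verified Lean document; each statement's English description precedes it below -/
import Mathlib

section
/- For every integer j with 0 ≤ j ≤ r−1 one has ∑_{ν=1}^{p} ∑_{i=1}^{ρ} w_i · ((ν−1+μ_i)/p)^j · Ψ((ν−1+μ_i)/p) = 0. -/
open Set

noncomputable section

/-- Supremum of `|x|` over `[a, b]`. -/
def supIcc (a b : ℝ) (x : ℝ → ℝ) : ℝ := ⨆ t : Set.Icc a b, |x t.1|

/-- `x` is bounded on `[a, b]`. -/
def BddIcc (a b : ℝ) (x : ℝ → ℝ) : Prop := ∃ M, ∀ t ∈ Set.Icc a b, |x t| ≤ M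

/-- The quadrature rule `(w, μ)` on `[0,1]` has degree of precision at least `k`:
it integrates exactly all polynomials of degree at most `k`. -/
def Precision {ρ : ℕ} (w μ : Fin ρ → ℝ) (k : ℕ) : Prop :=
  ∀ P : Polynomial ℝ, P.natDegree ≤ k →
    ∑ i, w i * P.eval (μ i) = ∫ t in (0:ℝ)..1, P.eval t

/-- `Ψ(t) = ∏ i (t - q i)`. -/
def Psi {r : ℕ} (q : Fin r → ℝ) (t : ℝ) : ℝ := ∏ i, (t - q i)

/-- `q` lists the Gauss points of order `r` in `(0,1)`. -/
def GaussPts {r : ℕ} (q : Fin r → ℝ) : Prop :=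
  StrictMono q ∧ (∀ i, q i ∈ Set.Ioo (0:ℝ) 1) ∧
    ∀ j, j < r → ∫ t in (0:ℝ)..1, t ^ j * Psi q t = 0

/-- Quadrature nodes `ζ_i^{j+1}` of the composite rule, `j = 0, …, m-1`. -/
def qNode {ρ : ℕ} (a b : ℝ) (μ : Fin ρ → ℝ) (m j : ℕ) (i : Fin ρ) : ℝ :=
  a + (j : ℝ) * ((b - a) / m) + μ i * ((b - a) / m)

/-- Nyström operator, linear kernel. -/
def nystL {ρ : ℕ} (a b : ℝ) (w μ : Fin ρ → ℝ) (m : ℕ) (κ : ℝ → ℝ → ℝ) (x : ℝ → ℝ) :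
    ℝ → ℝ := fun s =>
  ((b - a) / m) *
    ∑ j ∈ Finset.range m, ∑ i, w i * κ s (qNode a b μ m j i) * x (qNode a b μ m j i)

/-- Nyström operator, Urysohn kernel. -/
def nystU {ρ : ℕ} (a b : ℝ) (w μ : Fin ρ → ℝ) (m : ℕ) (κ : ℝ → ℝ → ℝ → ℝ) (x : ℝ → ℝ) :
    ℝ → ℝ := fun s =>
  ((b - a) / m) *
    ∑ j ∈ Finset.range m, ∑ i, w i * κ s (qNode a b μ m j i) (x (qNode a b μ m j i))

/-- Fréchet derivative `K_m'(x) v` of the Nyström operator. -/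
def nystU' {ρ : ℕ} (a b : ℝ) (w μ : Fin ρ → ℝ) (m : ℕ) (κ : ℝ → ℝ → ℝ → ℝ) (x v : ℝ → ℝ) :
    ℝ → ℝ := fun s =>
  ((b - a) / m) *
    ∑ j ∈ Finset.range m, ∑ i,
      w i * deriv (κ s (qNode a b μ m j i)) (x (qNode a b μ m j i)) * v (qNode a b μ m j i)

/-- Collocation nodes `τ_i^{k+1}`, `k = 0, …, n-1`. -/
def cNode {r : ℕ} (a b : ℝ) (q : Fin r → ℝ) (n k : ℕ) (i : Fin r) : ℝ :=
  a + (k : ℝ) * ((b - a) / n) + q i * ((b - a) / n)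

/-- Index of the subinterval of the uniform partition of `[a,b]` containing `t`. -/
def iIdx (a b : ℝ) (n : ℕ) (t : ℝ) : ℕ :=
  min (n - 1) (⌊(t - a) / ((b - a) / n)⌋.toNat)

/-- Piecewise-polynomial interpolatory projection at the `r` Gauss points of each
subinterval of the uniform partition of `[a,b]` into `n` parts. -/
def projQ {r : ℕ} (a b : ℝ) (q : Fin r → ℝ) (n : ℕ) (x : ℝ → ℝ) : ℝ → ℝ := fun t =>
  (Lagrange.interpolate Finset.univ (cNode a b q n (iIdx a b n t))
    fun i => x (cNode a b q n (iIdx a b n t) i)).eval t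

/-- Discrete modified projection operator, linear case. -/
def modL {ρ r : ℕ} (a b : ℝ) (w μ : Fin ρ → ℝ) (q : Fin r → ℝ) (n m : ℕ)
    (κ : ℝ → ℝ → ℝ) (x : ℝ → ℝ) : ℝ → ℝ :=
  projQ a b q n (nystL a b w μ m κ x) + nystL a b w μ m κ (projQ a b q n x)
    - projQ a b q n (nystL a b w μ m κ (projQ a b q n x))

/-- Discrete modified projection operator, Urysohn case. -/
def modU {ρ r : ℕ} (a b : ℝ) (w μ : Fin ρ → ℝ) (q : Fin r → ℝ) (n m : ℕ)
    (κ : ℝ → ℝ → ℝ → ℝ) (x : ℝ → ℝ) : ℝ → ℝ :=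
  projQ a b q n (nystU a b w μ m κ x) + nystU a b w μ m κ (projQ a b q n x)
    - projQ a b q n (nystU a b w μ m κ (projQ a b q n x))

/-- Fréchet derivative of `modU` at `x`, applied to `v`. -/
def modU' {ρ r : ℕ} (a b : ℝ) (w μ : Fin ρ → ℝ) (q : Fin r → ℝ) (n m : ℕ)
    (κ : ℝ → ℝ → ℝ → ℝ) (x v : ℝ → ℝ) : ℝ → ℝ :=
  projQ a b q n (nystU' a b w μ m κ x v)
    + nystU' a b w μ m κ (projQ a b q n x) (projQ a b q n v)
    - projQ a b q n (nystU' a b w μ m κ (projQ a b q n x) (projQ a b q n v))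

/-- `‖x‖_{k,∞}`. -/
def CkNorm (a b : ℝ) (k : ℕ) (x : ℝ → ℝ) : ℝ :=
  ⨆ p : Fin (k + 1) × Set.Icc a b, |iteratedDeriv (p.1 : ℕ) x p.2.1|

/-- Mixed partial derivative `∂^{i+j} κ / ∂s^i ∂t^j`. -/
def pder (i j : ℕ) (κ : ℝ → ℝ → ℝ) (s t : ℝ) : ℝ :=
  iteratedDeriv i (fun s' => iteratedDeriv j (κ s') t) s

/-- `‖κ‖_{k,∞}`. -/
def kerNorm (a b : ℝ) (k : ℕ) (κ : ℝ → ℝ → ℝ) : ℝ :=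
  ⨆ p : {ij : ℕ × ℕ // ij.1 + ij.2 ≤ k} × (Set.Icc a b × Set.Icc a b),
    |pder p.1.1.1 p.1.1.2 κ p.2.1.1 p.2.2.1|

/-- `W = ∑ |w i|`. -/
def Wsum {ρ : ℕ} (w : Fin ρ → ℝ) : ℝ := ∑ i, |w i|

/-- `∂κ/∂u`, Urysohn kernel. -/
def du (κ : ℝ → ℝ → ℝ → ℝ) (s t u : ℝ) : ℝ := deriv (κ s t) u

/-- `∂²κ/∂u²`, Urysohn kernel. -/
def du2 (κ : ℝ → ℝ → ℝ → ℝ) (s t u : ℝ) : ℝ := deriv (deriv (κ s t)) u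

/-- supremum of `|g(s,t,u)|` over `s, t ∈ [a,b]`, `|u| ≤ B`. -/
def supU (a b B : ℝ) (g : ℝ → ℝ → ℝ → ℝ) : ℝ :=
  ⨆ v : Set.Icc a b × Set.Icc a b × Set.Icc (-B) B, |g v.1.1 v.2.1.1 v.2.2.1|

/-- `∂κ/∂u` exists everywhere and is continuous. -/
def Smooth1 (κ : ℝ → ℝ → ℝ → ℝ) : Prop :=
  (∀ s t : ℝ, Differentiable ℝ (κ s t)) ∧
    Continuous fun v : ℝ × ℝ × ℝ => du κ v.1 v.2.1 v.2.2

/-- `∂²κ/∂u²` exists everywhere and is continuous. -/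
def Smooth2 (κ : ℝ → ℝ → ℝ → ℝ) : Prop :=
  (∀ s t : ℝ, Differentiable ℝ (deriv (κ s t))) ∧
    Continuous fun v : ℝ × ℝ × ℝ => du2 κ v.1 v.2.1 v.2.2


/-- Lemma 3.1: the discrete orthogonality relation for the composite
quadrature rule and the Gauss-points polynomial `Ψ`. -/
theorem stmt0 {ρ r : ℕ} (hr : 1 ≤ r) (w μ : Fin ρ → ℝ)
    (hμ : ∀ i, μ i ∈ Set.Ioo (0:ℝ) 1) (hprec : Precision w μ (2 * r - 1))
    (q : Fin r → ℝ) (hq : GaussPts q) (p : ℕ) (hp : 1 ≤ p)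
    (j : ℕ) (hj : j ≤ r - 1) :
    ∑ ν ∈ Finset.range p, ∑ i, w i * (((ν : ℝ) + μ i) / p) ^ j *
      Psi q (((ν : ℝ) + μ i) / p) = 0 := by
  have hp0 : (p : ℝ) ≠ 0 := Nat.cast_ne_zero.mpr (by omega)
  set Q : Polynomial ℝ := Polynomial.X ^ j * ∏ i, (Polynomial.X - Polynomial.C (q i)) with hQ
  have hQeval : ∀ t : ℝ, Q.eval t = t ^ j * Psi q t := by
    intro t; simp [hQ, Psi, Polynomial.eval_prod]
  have hQdeg : Q.natDegree ≤ 2 * r - 1 := by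
    calc Q.natDegree ≤ (Polynomial.X ^ j : Polynomial ℝ).natDegree +
        (∏ i, (Polynomial.X - Polynomial.C (q i))).natDegree := Polynomial.natDegree_mul_le
      _ ≤ j + r := by
          have h1 : (∏ i, (Polynomial.X - Polynomial.C (q i))).natDegree ≤ r := by
            refine le_trans (Polynomial.natDegree_prod_le _ _) ?_
            simp [Polynomial.natDegree_X_sub_C]
          have h2 : (Polynomial.X ^ j : Polynomial ℝ).natDegree = j := by
            simp
          omega
      _ ≤ 2 * r - 1 := by omega
  have hcont : Continuous fun u : ℝ => u ^ j * Psi q u := by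
    apply Continuous.mul (by fun_prop)
    unfold Psi; fun_prop
  have key : ∀ ν : ℕ,
      (∑ i, w i * (((ν : ℝ) + μ i) / p) ^ j * Psi q (((ν : ℝ) + μ i) / p)) =
        (p : ℝ) * ∫ u in ((ν : ℝ)/p)..(((ν : ℝ)+1)/p), u ^ j * Psi q u := by
    intro ν
    set L : Polynomial ℝ := Polynomial.C ((p : ℝ))⁻¹ * (Polynomial.X + Polynomial.C (ν : ℝ))
      with hL
    have hLe : ∀ t : ℝ, (Q.comp L).eval t =
        (((ν : ℝ) + t) / p) ^ j * Psi q (((ν : ℝ) + t) / p) := by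
      intro t
      have hLt : L.eval t = ((ν : ℝ) + t) / p := by
        simp [hL]; ring
      rw [Polynomial.eval_comp, hLt, hQeval]
    have hLdeg : L.natDegree ≤ 1 := by
      refine le_trans Polynomial.natDegree_mul_le ?_
      simpa using (Polynomial.natDegree_X_add_C ((ν : ℝ))).le
    have hdeg : (Q.comp L).natDegree ≤ 2 * r - 1 := by
      refine le_trans Polynomial.natDegree_comp_le ?_
      calc Q.natDegree * L.natDegree ≤ (2 * r - 1) * 1 := Nat.mul_le_mul hQdeg hLdeg
        _ = 2 * r - 1 := mul_one _
    have hq1 := hprec (Q.comp L) hdeg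
    have hLHS : (∑ i, w i * (((ν : ℝ) + μ i) / p) ^ j * Psi q (((ν : ℝ) + μ i) / p)) =
        ∑ i, w i * (Q.comp L).eval (μ i) := by
      refine Finset.sum_congr rfl fun i _ => ?_
      rw [hLe, mul_assoc]
    rw [hLHS, hq1]
    have hint : (∫ t in (0:ℝ)..1, (Q.comp L).eval t) =
        ∫ t in (0:ℝ)..1, (((ν : ℝ) + t) / p) ^ j * Psi q (((ν : ℝ) + t) / p) := by
      congr 1; funext t; exact hLe t
    rw [hint]
    have h1 : (∫ t in (0:ℝ)..1, (((ν : ℝ) + t) / p) ^ j * Psi q (((ν : ℝ) + t) / p)) =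
        ∫ t in (0:ℝ)..1, ((t + (ν : ℝ)) / p) ^ j * Psi q ((t + (ν : ℝ)) / p) := by
      congr 1; funext t; rw [add_comm]
    rw [h1]
    have h2 : (∫ t in (0:ℝ)..1, ((t + (ν : ℝ)) / p) ^ j * Psi q ((t + (ν : ℝ)) / p)) =
        ∫ x in ((0:ℝ)+(ν:ℝ))..(1+(ν:ℝ)), (x / p) ^ j * Psi q (x / p) :=
      intervalIntegral.integral_comp_add_right (fun x => (x / p) ^ j * Psi q (x / p)) (ν : ℝ)
    rw [h2]
    have h3 : (∫ x in ((0:ℝ)+(ν:ℝ))..(1+(ν:ℝ)), (x / p) ^ j * Psi q (x / p)) =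
        (p : ℝ) • ∫ u in (((0:ℝ)+(ν:ℝ))/p)..((1+(ν:ℝ))/p), u ^ j * Psi q u :=
      intervalIntegral.integral_comp_div (fun u => u ^ j * Psi q u) hp0
    rw [h3, smul_eq_mul]
    norm_num [add_comm]
  simp_rw [key, ← Finset.mul_sum]
  have hadj : (∑ ν ∈ Finset.range p,
      ∫ u in ((ν : ℝ)/p)..(((ν : ℝ)+1)/p), u ^ j * Psi q u) =
      ∫ u in (((0:ℕ) : ℝ)/p)..(((p:ℕ) : ℝ)/p), u ^ j * Psi q u := by
    have := intervalIntegral.sum_integral_adjacent_intervals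
      (μ := MeasureTheory.volume)
      (a := fun k : ℕ => (k : ℝ) / p) (f := fun u => u ^ j * Psi q u) (n := p)
      (fun k _ => hcont.intervalIntegrable _ _)
    simpa [Nat.cast_succ] using this
  rw [hadj]
  have h01 : (((0:ℕ) : ℝ)/p) = (0:ℝ) ∧ (((p:ℕ) : ℝ)/p) = (1:ℝ) := by
    constructor <;> field_simp <;> simp
  rw [h01.1, h01.2]
  have := hq.2.2 j (by omega)
  simp [this]

end
end

section
/- Assume ∂κ/∂u and ∂²κ/∂u² exist and are continuous on Ω, let f ∈ C[a,b], and let φ ∈ C[a,b] solve x − K(x) = f. Fix an integer p ≥ 1 and set m = n·p. Suppose there exist an integer m₁ and a constant C₇ such that for every m ≥ m₁ the operator I − K_m'(φ) is bijective on the Banach space of all bounded functions [a,b] → ℝ with the supremum norm and ‖(I − K_m'(φ))^{−1}‖ ≤ C₇. Then there exists an integer n₁ such that for every n ≥ n₁ with n·p ≥ m₁, the operator I − (K̃_n^M)'(φ) is bijective on that space and ‖(I − (K̃_n^M)'(φ))^{−1}‖ ≤ 2·C₇. -/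
open Set

noncomputable section

section Aux

open Finset

/-! ### supIcc lemmas -/

lemma supIcc_nonneg (a b : ℝ) (x : ℝ → ℝ) : 0 ≤ supIcc a b x :=
  Real.iSup_nonneg fun _ => abs_nonneg _

lemma le_supIcc {a b : ℝ} {x : ℝ → ℝ} (hx : BddIcc a b x) {t : ℝ} (ht : t ∈ Set.Icc a b) :
    |x t| ≤ supIcc a b x := by
  obtain ⟨M, hM⟩ := hx
  exact le_ciSup (f := fun u : Set.Icc a b => |x u.1|)
    ⟨M, by rintro y ⟨u, rfl⟩; exact hM u.1 u.2⟩ ⟨t, ht⟩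

lemma supIcc_le {a b : ℝ} (hab : a ≤ b) {x : ℝ → ℝ} {M : ℝ}
    (h : ∀ t ∈ Set.Icc a b, |x t| ≤ M) : supIcc a b x ≤ M := by
  have : Nonempty (Set.Icc a b) := ⟨⟨a, le_refl a, hab⟩⟩
  exact ciSup_le fun t => h t.1 t.2

lemma supIcc_zero {a b : ℝ} (hab : a ≤ b) : supIcc a b (0 : ℝ → ℝ) = 0 :=
  le_antisymm (supIcc_le hab (by simp)) (supIcc_nonneg a b _)

lemma BddIcc.sub {a b : ℝ} {x y : ℝ → ℝ} (hx : BddIcc a b x) (hy : BddIcc a b y) :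
    BddIcc a b (x - y) := by
  obtain ⟨M, hM⟩ := hx; obtain ⟨N, hN⟩ := hy
  exact ⟨M + N, fun t ht => by
    simpa using (abs_sub (x t) (y t)).trans (add_le_add (hM t ht) (hN t ht))⟩

lemma BddIcc.add {a b : ℝ} {x y : ℝ → ℝ} (hx : BddIcc a b x) (hy : BddIcc a b y) :
    BddIcc a b (x + y) := by
  obtain ⟨M, hM⟩ := hx; obtain ⟨N, hN⟩ := hy
  exact ⟨M + N, fun t ht => by
    simpa using (abs_add_le (x t) (y t)).trans (add_le_add (hM t ht) (hN t ht))⟩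

lemma BddIcc_of_continuous {a b : ℝ} {x : ℝ → ℝ} (hx : Continuous x) : BddIcc a b x := by
  obtain ⟨C, hC⟩ := isCompact_Icc.exists_bound_of_continuousOn (hx.continuousOn (s := Set.Icc a b))
  exact ⟨C, fun t ht => by simpa using hC t ht⟩

/-! ### node lemmas -/

lemma qNode_mem {ρ : ℕ} {a b : ℝ} (hab : a < b) {μ : Fin ρ → ℝ}
    (hμ : ∀ i, μ i ∈ Set.Ioo (0:ℝ) 1) {m j : ℕ} (hj : j < m) (i : Fin ρ) :
    qNode a b μ m j i ∈ Set.Icc a b := by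
  have hm0 : 0 < (m:ℝ) := by exact_mod_cast lt_of_le_of_lt (Nat.zero_le j) hj
  have hh : 0 < (b - a) / m := div_pos (by linarith) hm0
  have hjm : (j:ℝ) + 1 ≤ (m:ℝ) := by exact_mod_cast hj
  obtain ⟨h0, h1⟩ := hμ i
  have hba : (b - a) = (m:ℝ) * ((b - a) / m) := by field_simp
  unfold qNode
  constructor
  · nlinarith [mul_nonneg (Nat.cast_nonneg j : (0:ℝ) ≤ j) hh.le]
  · nlinarith [mul_le_mul_of_nonneg_right (by linarith : (j:ℝ) + μ i ≤ (m:ℝ)) hh.le]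

lemma cNode_mem_sub {r : ℕ} {a b : ℝ} (hab : a < b) {q : Fin r → ℝ}
    (hq : ∀ i, q i ∈ Set.Ioo (0:ℝ) 1) {n : ℕ} (hn : 1 ≤ n) (k : ℕ) (i : Fin r) :
    cNode a b q n k i ∈ Set.Icc (a + k * ((b-a)/n)) (a + k * ((b-a)/n) + (b-a)/n) := by
  have hn0 : 0 < (n:ℝ) := by exact_mod_cast hn
  have hh : 0 < (b - a) / n := div_pos (by linarith) hn0
  obtain ⟨h0, h1⟩ := hq i
  unfold cNode
  constructor
  · nlinarith
  · nlinarith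

lemma sub_interval_subset {a b : ℝ} (hab : a < b) {n k : ℕ} (hk : k < n) :
    Set.Icc (a + k * ((b-a)/n)) (a + k * ((b-a)/n) + (b-a)/n) ⊆ Set.Icc a b := by
  have hn0 : 0 < (n:ℝ) := by exact_mod_cast lt_of_le_of_lt (Nat.zero_le k) hk
  have hh : 0 < (b - a) / n := div_pos (by linarith) hn0
  have hkn : (k:ℝ) + 1 ≤ (n:ℝ) := by exact_mod_cast hk
  have hba : (b - a) = (n:ℝ) * ((b - a) / n) := by field_simp
  intro t ht
  obtain ⟨ht1, ht2⟩ := ht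
  constructor
  · nlinarith [mul_nonneg (Nat.cast_nonneg k : (0:ℝ) ≤ k) hh.le]
  · nlinarith [mul_le_mul_of_nonneg_right hkn hh.le]

lemma cNode_mem {r : ℕ} {a b : ℝ} (hab : a < b) {q : Fin r → ℝ}
    (hq : ∀ i, q i ∈ Set.Ioo (0:ℝ) 1) {n k : ℕ} (hn : 1 ≤ n) (hk : k < n) (i : Fin r) :
    cNode a b q n k i ∈ Set.Icc a b :=
  sub_interval_subset hab hk (cNode_mem_sub hab hq hn k i)

lemma iIdx_lt {a b : ℝ} {n : ℕ} (hn : 1 ≤ n) (t : ℝ) : iIdx a b n t < n :=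
  lt_of_le_of_lt (min_le_left _ _) (Nat.sub_lt hn one_pos)

lemma iIdx_spec {a b : ℝ} (hab : a < b) {n : ℕ} (hn : 1 ≤ n) {t : ℝ}
    (ht : t ∈ Set.Icc a b) :
    a + (iIdx a b n t) * ((b-a)/n) ≤ t ∧
      t ≤ a + (iIdx a b n t) * ((b-a)/n) + (b-a)/n := by
  have hn0 : 0 < (n:ℝ) := by exact_mod_cast hn
  set h := (b - a) / n with hdef
  have hh : 0 < h := by rw [hdef]; exact div_pos (by linarith [ht.1, ht.2]) hn0
  set u := (t - a) / h with hudef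
  have hu0 : 0 ≤ u := div_nonneg (by linarith [ht.1]) hh.le
  have hun : u ≤ (n:ℝ) := by
    rw [hudef, div_le_iff₀ hh]
    have : (n:ℝ) * h = b - a := by rw [hdef]; field_simp
    rw [this]; linarith [ht.2]
  have huh : u * h = t - a := div_mul_cancel₀ _ hh.ne'
  have hfl0 : (0:ℤ) ≤ ⌊u⌋ := Int.floor_nonneg.2 hu0
  have hcast : ((⌊u⌋.toNat : ℕ) : ℝ) = (⌊u⌋ : ℝ) := by
    exact_mod_cast congrArg (Int.cast : ℤ → ℝ) (Int.toNat_of_nonneg hfl0)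
  have hk1 : ((iIdx a b n t : ℕ) : ℝ) ≤ u := by
    have h1 : iIdx a b n t ≤ ⌊u⌋.toNat := min_le_right _ _
    have h2 : ((iIdx a b n t : ℕ) : ℝ) ≤ ((⌊u⌋.toNat : ℕ) : ℝ) := by exact_mod_cast h1
    rw [hcast] at h2
    exact h2.trans (Int.floor_le u)
  have hk2 : u ≤ ((iIdx a b n t : ℕ) : ℝ) + 1 := by
    rcases le_or_gt (⌊u⌋.toNat) (n - 1) with hc | hc
    · have : iIdx a b n t = ⌊u⌋.toNat := min_eq_right hc
      rw [this, hcast]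
      exact (Int.lt_floor_add_one u).le
    · have : iIdx a b n t = n - 1 := min_eq_left hc.le
      rw [this]
      have : ((n - 1 : ℕ) : ℝ) = (n:ℝ) - 1 := by
        have := Nat.cast_sub (R := ℝ) hn
        simpa using this
      rw [this]; linarith
  constructor
  · have := mul_le_mul_of_nonneg_right hk1 hh.le
    rw [huh] at this; linarith
  · have := mul_le_mul_of_nonneg_right hk2 hh.le
    rw [huh] at this; linarith


/-! ### Lagrange / projQ lemmas -/

/-- The Lebesgue-type constant of the Gauss points. -/
def Lam {r : ℕ} (q : Fin r → ℝ) : ℝ :=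
  1 + ∑ i, (∏ j ∈ Finset.univ.erase i, |q i - q j|)⁻¹

lemma Lam_sum_nonneg {r : ℕ} (q : Fin r → ℝ) :
    0 ≤ ∑ i, (∏ j ∈ Finset.univ.erase i, |q i - q j|)⁻¹ :=
  Finset.sum_nonneg fun i _ => inv_nonneg.2 (Finset.prod_nonneg fun j _ => abs_nonneg _)

lemma one_le_Lam {r : ℕ} (q : Fin r → ℝ) : 1 ≤ Lam q := by
  have := Lam_sum_nonneg q; unfold Lam; linarith

lemma projQ_apply {r : ℕ} (a b : ℝ) (q : Fin r → ℝ) (n : ℕ) (x : ℝ → ℝ) (t : ℝ) :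
    projQ a b q n x t =
      ∑ i, x (cNode a b q n (iIdx a b n t) i) *
        (Lagrange.basis Finset.univ (cNode a b q n (iIdx a b n t)) i).eval t := by
  simp [projQ, Lagrange.interpolate_apply, Polynomial.eval_finset_sum]

lemma cNode_injOn {r : ℕ} {a b : ℝ} (hab : a < b) {q : Fin r → ℝ} (hq1 : StrictMono q)
    {n : ℕ} (hn : 1 ≤ n) (k : ℕ) :
    Set.InjOn (cNode a b q n k) ↑(Finset.univ : Finset (Fin r)) := by
  have hn0 : 0 < (n:ℝ) := by exact_mod_cast hn
  have hh : ((b - a) / n) ≠ 0 := ne_of_gt (div_pos (by linarith) hn0)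
  intro i _ j _ hij
  apply hq1.injective
  have : q i * ((b-a)/n) = q j * ((b-a)/n) := by
    unfold cNode at hij; linarith
  exact mul_right_cancel₀ hh this

lemma basis_eval_bound {r : ℕ} {a b : ℝ} (hab : a < b) {q : Fin r → ℝ}
    (hq : ∀ i, q i ∈ Set.Ioo (0:ℝ) 1) {n : ℕ} (hn : 1 ≤ n) (k : ℕ)
    {t : ℝ} (ht : t ∈ Set.Icc (a + k * ((b-a)/n)) (a + k * ((b-a)/n) + (b-a)/n)) (i : Fin r) :
    |(Lagrange.basis Finset.univ (cNode a b q n k) i).eval t| ≤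
      (∏ j ∈ Finset.univ.erase i, |q i - q j|)⁻¹ := by
  have hn0 : 0 < (n:ℝ) := by exact_mod_cast hn
  have hh : 0 < (b - a) / n := div_pos (by linarith) hn0
  rw [Lagrange.basis, Polynomial.eval_prod, Finset.abs_prod, ← Finset.prod_inv_distrib]
  refine Finset.prod_le_prod (fun j _ => abs_nonneg _) (fun j _ => ?_)
  have hdiff : cNode a b q n k i - cNode a b q n k j = (q i - q j) * ((b-a)/n) := by
    unfold cNode; ring
  have hev : Polynomial.eval t (Lagrange.basisDivisor (cNode a b q n k i) (cNode a b q n k j))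
      = (cNode a b q n k i - cNode a b q n k j)⁻¹ * (t - cNode a b q n k j) := by
    simp [Lagrange.basisDivisor]
  rw [hev, abs_mul, abs_inv, hdiff, abs_mul]
  have htj : |t - cNode a b q n k j| ≤ (b-a)/n := by
    have hcj := cNode_mem_sub hab hq hn k j
    rw [abs_le]
    constructor <;> [linarith [ht.1, hcj.2]; linarith [ht.2, hcj.1]]
  have habs : |(b-a)/n| = (b-a)/n := abs_of_pos hh
  rcases eq_or_ne (q i) (q j) with hqe | hqe
  · simp [hqe]
  · have hq0 : 0 < |q i - q j| := abs_pos.2 (sub_ne_zero.2 hqe)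
    rw [habs, mul_inv]
    calc |q i - q j|⁻¹ * ((b-a)/n)⁻¹ * |t - cNode a b q n k j|
        ≤ |q i - q j|⁻¹ * ((b-a)/n)⁻¹ * ((b-a)/n) := by
          apply mul_le_mul_of_nonneg_left htj
          positivity
      _ = |q i - q j|⁻¹ := by rw [mul_assoc, inv_mul_cancel₀ hh.ne', mul_one]

lemma sum_basis_eval_one {r : ℕ} (hr : 1 ≤ r) {a b : ℝ} (hab : a < b) {q : Fin r → ℝ}
    (hq1 : StrictMono q) {n : ℕ} (hn : 1 ≤ n) (k : ℕ) (t : ℝ) :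
    ∑ i, (Lagrange.basis Finset.univ (cNode a b q n k) i).eval t = 1 := by
  have : Nonempty (Fin r) := ⟨⟨0, hr⟩⟩
  have h := Lagrange.sum_basis (cNode_injOn hab hq1 hn k) Finset.univ_nonempty
  have := congrArg (Polynomial.eval t) h
  rwa [Polynomial.eval_finset_sum, Polynomial.eval_one] at this

lemma abs_projQ_le {r : ℕ} {a b : ℝ} (hab : a < b) {q : Fin r → ℝ}
    (hq : ∀ i, q i ∈ Set.Ioo (0:ℝ) 1) {n : ℕ} (hn : 1 ≤ n) {x : ℝ → ℝ} {M : ℝ} (hM : 0 ≤ M)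
    (hx : ∀ k < n, ∀ i, |x (cNode a b q n k i)| ≤ M) {t : ℝ} (ht : t ∈ Set.Icc a b) :
    |projQ a b q n x t| ≤ Lam q * M := by
  set k := iIdx a b n t with hk
  have hkn : k < n := iIdx_lt hn t
  obtain ⟨h1, h2⟩ := iIdx_spec hab hn ht
  rw [projQ_apply]
  calc |∑ i, x (cNode a b q n k i) * (Lagrange.basis Finset.univ (cNode a b q n k) i).eval t|
      ≤ ∑ i, |x (cNode a b q n k i) * (Lagrange.basis Finset.univ (cNode a b q n k) i).eval t| :=
        Finset.abs_sum_le_sum_abs _ _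
    _ ≤ ∑ i, M * (∏ j ∈ Finset.univ.erase i, |q i - q j|)⁻¹ := by
        refine Finset.sum_le_sum fun i _ => ?_
        rw [abs_mul]
        exact mul_le_mul (hx k hkn i) (basis_eval_bound hab hq hn k ⟨h1, h2⟩ i)
          (abs_nonneg _) hM
    _ = M * ∑ i, (∏ j ∈ Finset.univ.erase i, |q i - q j|)⁻¹ := by
        rw [Finset.mul_sum]
    _ ≤ Lam q * M := by
        have h0 := Lam_sum_nonneg q
        have h1 : ∑ i, (∏ j ∈ Finset.univ.erase i, |q i - q j|)⁻¹ ≤ Lam q := by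
          unfold Lam; linarith
        nlinarith [one_le_Lam q]

lemma abs_projQ_sub_le {r : ℕ} (hr : 1 ≤ r) {a b : ℝ} (hab : a < b) {q : Fin r → ℝ}
    (hq1 : StrictMono q) (hq : ∀ i, q i ∈ Set.Ioo (0:ℝ) 1) {n : ℕ} (hn : 1 ≤ n)
    {g : ℝ → ℝ} {e : ℝ} (he : 0 ≤ e) {t : ℝ} (ht : t ∈ Set.Icc a b)
    (hg : ∀ i, |g (cNode a b q n (iIdx a b n t) i) - g t| ≤ e) :
    |projQ a b q n g t - g t| ≤ Lam q * e := by
  set k := iIdx a b n t with hk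
  obtain ⟨h1, h2⟩ := iIdx_spec hab hn ht
  have hsum := sum_basis_eval_one hr hab hq1 hn k t
  have hrw : projQ a b q n g t - g t =
      ∑ i, (g (cNode a b q n k i) - g t) *
        (Lagrange.basis Finset.univ (cNode a b q n k) i).eval t := by
    have hexp : ∑ i, (g (cNode a b q n k i) - g t) *
        (Lagrange.basis Finset.univ (cNode a b q n k) i).eval t =
        (∑ i, g (cNode a b q n k i) *
          (Lagrange.basis Finset.univ (cNode a b q n k) i).eval t) -
        g t * ∑ i, (Lagrange.basis Finset.univ (cNode a b q n k) i).eval t := by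
      rw [Finset.mul_sum, ← Finset.sum_sub_distrib]
      exact Finset.sum_congr rfl fun i _ => by ring
    rw [projQ_apply, hexp, hsum, mul_one]
  rw [hrw]
  calc |∑ i, (g (cNode a b q n k i) - g t) *
        (Lagrange.basis Finset.univ (cNode a b q n k) i).eval t|
      ≤ ∑ i, |(g (cNode a b q n k i) - g t) *
        (Lagrange.basis Finset.univ (cNode a b q n k) i).eval t| :=
        Finset.abs_sum_le_sum_abs _ _
    _ ≤ ∑ i, e * (∏ j ∈ Finset.univ.erase i, |q i - q j|)⁻¹ := by
        refine Finset.sum_le_sum fun i _ => ?_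
        rw [abs_mul]
        exact mul_le_mul (hg i) (basis_eval_bound hab hq hn k ⟨h1, h2⟩ i) (abs_nonneg _) he
    _ = e * ∑ i, (∏ j ∈ Finset.univ.erase i, |q i - q j|)⁻¹ := by rw [Finset.mul_sum]
    _ ≤ Lam q * e := by
        have h0 := Lam_sum_nonneg q
        have h1 : ∑ i, (∏ j ∈ Finset.univ.erase i, |q i - q j|)⁻¹ ≤ Lam q := by
          unfold Lam; linarith
        nlinarith [one_le_Lam q]


/-! ### Nyström lemmas -/

lemma nyst_sum_bound {ρ : ℕ} {m : ℕ} (hm : 1 ≤ m) {a b : ℝ} (hab : a < b)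
    (w : Fin ρ → ℝ) (F : ℕ → Fin ρ → ℝ) {C : ℝ}
    (hF : ∀ j < m, ∀ i, |F j i| ≤ C) :
    |((b - a)/m) * ∑ j ∈ Finset.range m, ∑ i, w i * F j i| ≤ (b - a) * Wsum w * C := by
  have hm0 : 0 < (m:ℝ) := by exact_mod_cast hm
  have hh : 0 < (b - a) / m := div_pos (by linarith) hm0
  rw [abs_mul, abs_of_pos hh]
  calc ((b - a)/m) * |∑ j ∈ Finset.range m, ∑ i, w i * F j i|
      ≤ ((b - a)/m) * ∑ j ∈ Finset.range m, (Wsum w * C) := by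
        apply mul_le_mul_of_nonneg_left _ hh.le
        calc |∑ j ∈ Finset.range m, ∑ i, w i * F j i|
            ≤ ∑ j ∈ Finset.range m, |∑ i, w i * F j i| := Finset.abs_sum_le_sum_abs _ _
          _ ≤ ∑ j ∈ Finset.range m, (Wsum w * C) := by
              refine Finset.sum_le_sum fun j hj => ?_
              calc |∑ i, w i * F j i| ≤ ∑ i, |w i * F j i| := Finset.abs_sum_le_sum_abs _ _
                _ ≤ ∑ i, |w i| * C := by
                    refine Finset.sum_le_sum fun i _ => ?_
                    rw [abs_mul]
                    exact mul_le_mul_of_nonneg_left (hF j (Finset.mem_range.1 hj) i)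
                      (abs_nonneg _)
                _ = Wsum w * C := by rw [Wsum, Finset.sum_mul]
    _ = (b - a) * Wsum w * C := by
        rw [Finset.sum_const, Finset.card_range, nsmul_eq_mul]
        field_simp

lemma nystU'_sub_bound {ρ : ℕ} {m : ℕ} (hm : 1 ≤ m) {a b : ℝ} (hab : a < b)
    (w μ : Fin ρ → ℝ) (κ : ℝ → ℝ → ℝ → ℝ) (x v : ℝ → ℝ) (s s' : ℝ) {e V : ℝ}
    (hd : ∀ j < m, ∀ i, |du κ s (qNode a b μ m j i) (x (qNode a b μ m j i))
        - du κ s' (qNode a b μ m j i) (x (qNode a b μ m j i))| ≤ e)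
    (hv : ∀ j < m, ∀ i, |v (qNode a b μ m j i)| ≤ V) (hV : 0 ≤ V) :
    |nystU' a b w μ m κ x v s - nystU' a b w μ m κ x v s'| ≤ (b - a) * Wsum w * (e * V) := by
  have hrw : nystU' a b w μ m κ x v s - nystU' a b w μ m κ x v s' =
      ((b - a)/m) * ∑ j ∈ Finset.range m, ∑ i, w i *
        ((du κ s (qNode a b μ m j i) (x (qNode a b μ m j i))
          - du κ s' (qNode a b μ m j i) (x (qNode a b μ m j i))) * v (qNode a b μ m j i)) := by
    unfold nystU' du
    rw [← mul_sub, ← Finset.sum_sub_distrib]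
    congr 1
    refine Finset.sum_congr rfl fun j _ => ?_
    rw [← Finset.sum_sub_distrib]
    exact Finset.sum_congr rfl fun i _ => by ring
  rw [hrw]
  refine nyst_sum_bound hm hab w _ fun j hj i => ?_
  rw [abs_mul]
  exact mul_le_mul (hd j hj i) (hv j hj i) (abs_nonneg _)
    (le_trans (abs_nonneg _) (hd j hj i))

lemma continuous_nystU' {ρ : ℕ} (a b : ℝ) (w μ : Fin ρ → ℝ) (m : ℕ)
    {κ : ℝ → ℝ → ℝ → ℝ} (h1 : Smooth1 κ) (x v : ℝ → ℝ) :
    Continuous (nystU' a b w μ m κ x v) := by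
  unfold nystU'
  refine Continuous.mul continuous_const ?_
  refine continuous_finset_sum _ fun j _ => continuous_finset_sum _ fun i _ => ?_
  refine Continuous.mul (Continuous.mul continuous_const ?_) continuous_const
  have hc : Continuous fun s : ℝ => (s, qNode a b μ m j i, x (qNode a b μ m j i)) :=
    continuous_id.prodMk (continuous_const.prodMk continuous_const)
  have := h1.2.comp hc
  simpa [du, Function.comp_def] using this

/-! ### congruence lemmas -/

lemma projQ_congr {r : ℕ} {a b : ℝ} {q : Fin r → ℝ} {n : ℕ} (hn : 1 ≤ n) {x y : ℝ → ℝ}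
    (h : ∀ k < n, ∀ i, x (cNode a b q n k i) = y (cNode a b q n k i)) :
    projQ a b q n x = projQ a b q n y := by
  funext t
  rw [projQ_apply, projQ_apply]
  exact Finset.sum_congr rfl fun i _ => by rw [h _ (iIdx_lt hn t) i]

lemma nystU'_congr {ρ : ℕ} {a b : ℝ} {w μ : Fin ρ → ℝ} {m : ℕ} {κ : ℝ → ℝ → ℝ → ℝ}
    {x : ℝ → ℝ} {v v' : ℝ → ℝ}
    (h : ∀ j < m, ∀ i, v (qNode a b μ m j i) = v' (qNode a b μ m j i)) :
    nystU' a b w μ m κ x v = nystU' a b w μ m κ x v' := by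
  funext s
  unfold nystU'
  congr 1
  refine Finset.sum_congr rfl fun j hj => Finset.sum_congr rfl fun i _ => ?_
  rw [h j (Finset.mem_range.1 hj) i]

lemma modU'_congr {ρ r : ℕ} {a b : ℝ} {w μ : Fin ρ → ℝ} {q : Fin r → ℝ} {n m : ℕ}
    (hn : 1 ≤ n) {κ : ℝ → ℝ → ℝ → ℝ} {x : ℝ → ℝ} {v v' : ℝ → ℝ}
    (hqn : ∀ j < m, ∀ i, v (qNode a b μ m j i) = v' (qNode a b μ m j i))
    (hcn : ∀ k < n, ∀ i, v (cNode a b q n k i) = v' (cNode a b q n k i)) :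
    modU' a b w μ q n m κ x v = modU' a b w μ q n m κ x v' := by
  unfold modU'
  rw [nystU'_congr hqn, projQ_congr hn hcn]

/-! ### linearity lemmas -/

lemma projQ_add {r : ℕ} (a b : ℝ) (q : Fin r → ℝ) (n : ℕ) (x y : ℝ → ℝ) :
    projQ a b q n (x + y) = projQ a b q n x + projQ a b q n y := by
  funext t
  simp only [Pi.add_apply, projQ_apply, ← Finset.sum_add_distrib]
  exact Finset.sum_congr rfl fun i _ => by ring

lemma projQ_smul {r : ℕ} (a b : ℝ) (q : Fin r → ℝ) (n : ℕ) (c : ℝ) (x : ℝ → ℝ) :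
    projQ a b q n (c • x) = c • projQ a b q n x := by
  funext t
  simp only [Pi.smul_apply, smul_eq_mul, projQ_apply, Finset.mul_sum]
  exact Finset.sum_congr rfl fun i _ => by ring

lemma nystU'_add {ρ : ℕ} (a b : ℝ) (w μ : Fin ρ → ℝ) (m : ℕ) (κ : ℝ → ℝ → ℝ → ℝ)
    (x v v' : ℝ → ℝ) :
    nystU' a b w μ m κ x (v + v') = nystU' a b w μ m κ x v + nystU' a b w μ m κ x v' := by
  funext s
  simp only [Pi.add_apply, nystU', Finset.mul_sum, mul_add, Finset.sum_add_distrib]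

lemma nystU'_smul {ρ : ℕ} (a b : ℝ) (w μ : Fin ρ → ℝ) (m : ℕ) (κ : ℝ → ℝ → ℝ → ℝ)
    (c : ℝ) (x v : ℝ → ℝ) :
    nystU' a b w μ m κ x (c • v) = c • nystU' a b w μ m κ x v := by
  funext s
  simp only [Pi.smul_apply, smul_eq_mul, nystU', Finset.mul_sum, ← mul_assoc]
  exact Finset.sum_congr rfl fun j _ => Finset.sum_congr rfl fun i _ => by ring

lemma modU'_add {ρ r : ℕ} (a b : ℝ) (w μ : Fin ρ → ℝ) (q : Fin r → ℝ) (n m : ℕ)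
    (κ : ℝ → ℝ → ℝ → ℝ) (x v v' : ℝ → ℝ) :
    modU' a b w μ q n m κ x (v + v') =
      modU' a b w μ q n m κ x v + modU' a b w μ q n m κ x v' := by
  unfold modU'
  rw [projQ_add a b q n v v', nystU'_add, projQ_add, nystU'_add, projQ_add]
  abel

lemma modU'_smul {ρ r : ℕ} (a b : ℝ) (w μ : Fin ρ → ℝ) (q : Fin r → ℝ) (n m : ℕ)
    (κ : ℝ → ℝ → ℝ → ℝ) (c : ℝ) (x v : ℝ → ℝ) :
    modU' a b w μ q n m κ x (c • v) = c • modU' a b w μ q n m κ x v := by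
  unfold modU'
  rw [projQ_smul a b q n c v, nystU'_smul, projQ_smul, nystU'_smul, projQ_smul]
  funext t
  simp only [Pi.add_apply, Pi.sub_apply, Pi.smul_apply, smul_eq_mul]
  ring

lemma modU'_zero {ρ r : ℕ} (a b : ℝ) (w μ : Fin ρ → ℝ) (q : Fin r → ℝ) (n m : ℕ)
    (κ : ℝ → ℝ → ℝ → ℝ) (x : ℝ → ℝ) :
    modU' a b w μ q n m κ x 0 = 0 := by
  have h := modU'_smul a b w μ q n m κ (0:ℝ) x 0
  simpa using h

lemma modU'_sub {ρ r : ℕ} (a b : ℝ) (w μ : Fin ρ → ℝ) (q : Fin r → ℝ) (n m : ℕ)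
    (κ : ℝ → ℝ → ℝ → ℝ) (x v v' : ℝ → ℝ) :
    modU' a b w μ q n m κ x (v - v') =
      modU' a b w μ q n m κ x v - modU' a b w μ q n m κ x v' := by
  have h := modU'_add a b w μ q n m κ x v' (v - v')
  rw [add_sub_cancel] at h
  rw [h]; abel

/-! ### boundedness of the operators -/

lemma BddIcc_projQ {r : ℕ} {a b : ℝ} (hab : a < b) {q : Fin r → ℝ}
    (hq : ∀ i, q i ∈ Set.Ioo (0:ℝ) 1) {n : ℕ} (hn : 1 ≤ n) {x : ℝ → ℝ}
    (hx : BddIcc a b x) : BddIcc a b (projQ a b q n x) := by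
  refine ⟨Lam q * supIcc a b x, fun t ht => ?_⟩
  exact abs_projQ_le hab hq hn (supIcc_nonneg a b x)
    (fun k hk i => le_supIcc hx (cNode_mem hab hq hn hk i)) ht

lemma BddIcc_modU' {ρ r : ℕ} {a b : ℝ} (hab : a < b) (w μ : Fin ρ → ℝ) {q : Fin r → ℝ}
    (hq : ∀ i, q i ∈ Set.Ioo (0:ℝ) 1) {n m : ℕ} (hn : 1 ≤ n)
    {κ : ℝ → ℝ → ℝ → ℝ} (h1 : Smooth1 κ) (x v : ℝ → ℝ) :
    BddIcc a b (modU' a b w μ q n m κ x v) := by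
  have h₁ : BddIcc a b (nystU' a b w μ m κ x v) :=
    BddIcc_of_continuous (continuous_nystU' a b w μ m h1 x v)
  have h₂ : BddIcc a b (nystU' a b w μ m κ (projQ a b q n x) (projQ a b q n v)) :=
    BddIcc_of_continuous (continuous_nystU' a b w μ m h1 _ _)
  exact ((BddIcc_projQ hab hq hn h₁).add h₂).sub (BddIcc_projQ hab hq hn h₂)

end Aux



set_option maxHeartbeats 1600000 in
/-- Proposition 4.3: invertibility of `I - (K̃ₙᴹ)'(φ)`. -/
theorem stmt9 {ρ r : ℕ} (hr : 1 ≤ r) (w μ : Fin ρ → ℝ)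
    (hμ : ∀ i, μ i ∈ Set.Ioo (0:ℝ) 1) (hprec : Precision w μ (2 * r - 1))
    (q : Fin r → ℝ) (hq : GaussPts q) (a b : ℝ) (hab : a < b)
    (κ : ℝ → ℝ → ℝ → ℝ)
    (hκ : Continuous fun v : ℝ × ℝ × ℝ => κ v.1 v.2.1 v.2.2)
    (h1 : Smooth1 κ) (h2 : Smooth2 κ)
    (f : ℝ → ℝ) (hf : Continuous f)
    (φ : ℝ → ℝ) (hφc : Continuous φ)
    (hφ : ∀ s, φ s - ∫ t in a..b, κ s t (φ t) = f s)
    (p : ℕ) (hp : 1 ≤ p)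
    (m₁ : ℕ) (C₇ : ℝ)
    (hbij : ∀ m, m₁ ≤ m → ∀ g : ℝ → ℝ, BddIcc a b g →
      ∃! v : ℝ → ℝ, BddIcc a b v ∧ v - nystU' a b w μ m κ φ v = g)
    (hnorm : ∀ m, m₁ ≤ m → ∀ v : ℝ → ℝ, BddIcc a b v →
      supIcc a b v ≤ C₇ * supIcc a b (v - nystU' a b w μ m κ φ v)) :
    ∃ n₁ : ℕ, ∀ n, n₁ ≤ n → m₁ ≤ n * p →
      (∀ g : ℝ → ℝ, BddIcc a b g →
        ∃! v : ℝ → ℝ, BddIcc a b v ∧ v - modU' a b w μ q n (n * p) κ φ v = g) ∧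
      ∀ v : ℝ → ℝ, BddIcc a b v →
        supIcc a b v ≤ 2 * C₇ * supIcc a b (v - modU' a b w μ q n (n * p) κ φ v) := by
  classical
  obtain ⟨hqmono, hqIoo, -⟩ := hq
  have hab' : a ≤ b := hab.le
  have hIccne : Nonempty (Set.Icc a b) := ⟨⟨a, le_refl a, hab'⟩⟩
  -- C₇ is positive
  have hC₇ : 0 < C₇ := by
    have h1' : BddIcc a b (fun _ => (1:ℝ)) := ⟨1, fun t _ => by simp⟩
    have h2' := hnorm m₁ le_rfl (fun _ => (1:ℝ)) h1'
    have h3' : supIcc a b (fun _ => (1:ℝ)) = 1 := by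
      unfold supIcc
      have he : (fun t : Set.Icc a b => |(1:ℝ)|) = fun _ => (1:ℝ) := by funext; simp
      rw [he, ciSup_const]
    rw [h3'] at h2'
    have h4' := supIcc_nonneg a b ((fun _ => (1:ℝ)) - nystU' a b w μ m₁ κ φ fun _ => (1:ℝ))
    nlinarith
  -- bound for φ
  obtain ⟨B₀, hB₀⟩ := BddIcc_of_continuous (a := a) (b := b) hφc
  have hB0nn : 0 ≤ B₀ := le_trans (abs_nonneg _) (hB₀ a ⟨le_rfl, hab'⟩)
  have hΛ1 : 1 ≤ Lam q := one_le_Lam q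
  set c := Lam q * B₀ + 1 with hcdef
  have hBc : B₀ ≤ c := by nlinarith
  have hΛBc : Lam q * B₀ ≤ c := by nlinarith
  -- uniform continuity of du κ on a compact box
  set K : Set (ℝ × ℝ × ℝ) := Set.Icc a b ×ˢ Set.Icc a b ×ˢ Set.Icc (-c) c with hKdef
  have hKc : IsCompact K := isCompact_Icc.prod (isCompact_Icc.prod isCompact_Icc)
  have hW0 : 0 ≤ Wsum w := Finset.sum_nonneg fun i _ => abs_nonneg _
  set X := Lam q * (1 + Lam q) * (b - a) * Wsum w with hXdef
  have hX0 : 0 ≤ X := by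
    have : (0:ℝ) ≤ b - a := by linarith
    have h1' : (0:ℝ) ≤ Lam q * (1 + Lam q) := by nlinarith
    positivity
  set ε₁ := (1 / (2 * C₇)) / (X + 1) with hεdef
  have hε₁0 : 0 < ε₁ := by positivity
  have hXε : X * ε₁ ≤ 1 / (2 * C₇) := by
    have h2C : 0 < 1 / (2 * C₇) := by positivity
    have heq : X * ε₁ = (1 / (2 * C₇)) * (X / (X + 1)) := by rw [hεdef]; ring
    have hfrac : X / (X + 1) ≤ 1 := by
      rw [div_le_one (by linarith)]; linarith
    nlinarith
  have hUC := hKc.uniformContinuousOn_of_continuous (h1.2.continuousOn)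
  rw [Metric.uniformContinuousOn_iff_le] at hUC
  obtain ⟨δ, hδ0, hδ⟩ := hUC ε₁ hε₁0
  obtain ⟨n₀, hn₀⟩ := exists_nat_gt ((b - a) / δ)
  refine ⟨max 1 n₀, fun n hn hm₁ => ?_⟩
  have hn1 : 1 ≤ n := le_trans (le_max_left 1 n₀) hn
  have hn0' : 0 < (n:ℝ) := by exact_mod_cast hn1
  have hm : 1 ≤ n * p := by
    have := Nat.mul_le_mul hn1 hp; simpa using this
  have hhδ : (b - a) / n ≤ δ := by
    have hn₀n : (n₀:ℝ) ≤ (n:ℝ) := by exact_mod_cast le_trans (le_max_right 1 n₀) hn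
    rw [div_le_iff₀ hn0']
    have hlt : (b - a) < n₀ * δ := by
      rw [div_lt_iff₀ hδ0] at hn₀; linarith
    nlinarith
  -- oscillation of du κ
  have hosc : ∀ s₁ ∈ Set.Icc a b, ∀ s₂ ∈ Set.Icc a b, |s₁ - s₂| ≤ δ →
      ∀ ζ ∈ Set.Icc a b, ∀ u : ℝ, |u| ≤ c →
      |du κ s₁ ζ u - du κ s₂ ζ u| ≤ ε₁ := by
    intro s₁ hs₁ s₂ hs₂ hs ζ hζ u hu
    have hmem : ∀ s' ∈ Set.Icc a b, (s', ζ, u) ∈ K := by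
      intro s' hs'
      rw [hKdef]
      refine Set.mem_prod.2 ⟨hs', Set.mem_prod.2 ⟨hζ, ?_⟩⟩
      rw [Set.mem_Icc, ← abs_le]; exact hu
    have hd : dist (s₁, ζ, u) (s₂, ζ, u) ≤ δ := by
      rw [Prod.dist_eq, Prod.dist_eq]
      simp only [dist_self, Real.dist_eq]
      have h00 : (0:ℝ) ⊔ 0 ≤ δ := by simpa using hδ0.le
      exact max_le hs h00
    have := hδ _ (hmem s₁ hs₁) _ (hmem s₂ hs₂) hd
    rwa [Real.dist_eq] at this
  -- the key pointwise estimate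
  have est : ∀ v : ℝ → ℝ, BddIcc a b v → ∀ t ∈ Set.Icc a b,
      |modU' a b w μ q n (n * p) κ φ v t - nystU' a b w μ (n * p) κ φ v t| ≤
        (1 / (2 * C₇)) * supIcc a b v := by
    intro v hv t ht
    set Vv := supIcc a b v with hVvdef
    have hVv0 : 0 ≤ Vv := supIcc_nonneg a b v
    have hvq : ∀ j < n * p, ∀ i, |v (qNode a b μ (n*p) j i)| ≤ Vv :=
      fun j hj i => le_supIcc hv (qNode_mem hab hμ hj i)
    have hvc : ∀ k < n, ∀ i, |v (cNode a b q n k i)| ≤ Vv :=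
      fun k hk i => le_supIcc hv (cNode_mem hab hqIoo hn1 hk i)
    have hφc' : ∀ k < n, ∀ i, |φ (cNode a b q n k i)| ≤ B₀ :=
      fun k hk i => hB₀ _ (cNode_mem hab hqIoo hn1 hk i)
    have hφq : ∀ j < n * p, ∀ i, |φ (qNode a b μ (n*p) j i)| ≤ c :=
      fun j hj i => le_trans (hB₀ _ (qNode_mem hab hμ hj i)) hBc
    have hpφq : ∀ j < n * p, ∀ i, |projQ a b q n φ (qNode a b μ (n*p) j i)| ≤ c :=
      fun j hj i => le_trans
        (abs_projQ_le hab hqIoo hn1 hB0nn hφc' (qNode_mem hab hμ hj i)) hΛBc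
    have hpvq : ∀ j < n * p, ∀ i, |projQ a b q n v (qNode a b μ (n*p) j i)| ≤ Lam q * Vv :=
      fun j hj i => abs_projQ_le hab hqIoo hn1 hVv0 hvc (qNode_mem hab hμ hj i)
    set k := iIdx a b n t with hkdef
    obtain ⟨ht1, ht2⟩ := iIdx_spec hab hn1 ht
    have hτd : ∀ i, |cNode a b q n k i - t| ≤ δ := by
      intro i
      obtain ⟨hc1, hc2⟩ := cNode_mem_sub hab hqIoo hn1 k i
      refine le_trans ?_ hhδ
      rw [abs_le]; constructor <;> linarith
    have hτIcc : ∀ i, cNode a b q n k i ∈ Set.Icc a b :=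
      fun i => cNode_mem hab hqIoo hn1 (iIdx_lt hn1 t) i
    -- first term
    set g₁ := nystU' a b w μ (n*p) κ φ v with hg₁def
    have hg1 : ∀ i, |g₁ (cNode a b q n k i) - g₁ t| ≤ (b - a) * Wsum w * (ε₁ * Vv) := by
      intro i
      refine nystU'_sub_bound hm hab w μ κ φ v _ _ (fun j hj i' => ?_) hvq hVv0
      exact hosc _ (hτIcc i) _ ht (hτd i) _ (qNode_mem hab hμ hj i') _ (hφq j hj i')
    have he1 : (0:ℝ) ≤ (b - a) * Wsum w * (ε₁ * Vv) := by
      have : (0:ℝ) ≤ b - a := by linarith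
      positivity
    have T1 : |projQ a b q n g₁ t - g₁ t| ≤ Lam q * ((b - a) * Wsum w * (ε₁ * Vv)) :=
      abs_projQ_sub_le hr hab hqmono hqIoo hn1 he1 ht hg1
    -- second term
    set g₂ := nystU' a b w μ (n*p) κ (projQ a b q n φ) (projQ a b q n v) with hg₂def
    have hg2 : ∀ i, |g₂ (cNode a b q n k i) - g₂ t| ≤
        (b - a) * Wsum w * (ε₁ * (Lam q * Vv)) := by
      intro i
      refine nystU'_sub_bound hm hab w μ κ _ _ _ _ (fun j hj i' => ?_) hpvq
        (by nlinarith)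
      exact hosc _ (hτIcc i) _ ht (hτd i) _ (qNode_mem hab hμ hj i') _ (hpφq j hj i')
    have he2 : (0:ℝ) ≤ (b - a) * Wsum w * (ε₁ * (Lam q * Vv)) := by
      have h0' : (0:ℝ) ≤ b - a := by linarith
      have h1' : (0:ℝ) ≤ Lam q := by linarith
      positivity
    have T2 : |projQ a b q n g₂ t - g₂ t| ≤ Lam q * ((b - a) * Wsum w * (ε₁ * (Lam q * Vv))) :=
      abs_projQ_sub_le hr hab hqmono hqIoo hn1 he2 ht hg2
    -- decomposition
    have hdec : modU' a b w μ q n (n * p) κ φ v t - nystU' a b w μ (n * p) κ φ v t =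
        (projQ a b q n g₁ t - g₁ t) + (g₂ t - projQ a b q n g₂ t) := by
      simp only [modU', Pi.add_apply, Pi.sub_apply, hg₁def, hg₂def]
      ring
    rw [hdec]
    calc |(projQ a b q n g₁ t - g₁ t) + (g₂ t - projQ a b q n g₂ t)|
        ≤ |projQ a b q n g₁ t - g₁ t| + |g₂ t - projQ a b q n g₂ t| := abs_add_le _ _
      _ ≤ Lam q * ((b - a) * Wsum w * (ε₁ * Vv)) +
            Lam q * ((b - a) * Wsum w * (ε₁ * (Lam q * Vv))) := by
          rw [abs_sub_comm (g₂ t)]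
          exact add_le_add T1 T2
      _ = X * ε₁ * Vv := by rw [hXdef]; ring
      _ ≤ (1 / (2 * C₇)) * Vv := mul_le_mul_of_nonneg_right hXε hVv0
  -- the norm inequality for the modified operator
  have key : ∀ v : ℝ → ℝ, BddIcc a b v →
      supIcc a b v ≤ 2 * C₇ * supIcc a b (v - modU' a b w μ q n (n * p) κ φ v) := by
    intro v hv
    set Vv := supIcc a b v with hVvdef
    have hVv0 : 0 ≤ Vv := supIcc_nonneg a b v
    have hbm : BddIcc a b (modU' a b w μ q n (n * p) κ φ v) :=
      BddIcc_modU' hab w μ hqIoo hn1 h1 φ v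
    set s₁ := supIcc a b (v - modU' a b w μ q n (n * p) κ φ v) with hs₁def
    have hs₁0 : 0 ≤ s₁ := supIcc_nonneg a b _
    have h2 : supIcc a b (v - nystU' a b w μ (n*p) κ φ v) ≤ s₁ + (1 / (2 * C₇)) * Vv := by
      refine supIcc_le hab' fun t ht => ?_
      have he := est v hv t ht
      have hs := le_supIcc (hv.sub hbm) ht
      simp only [Pi.sub_apply] at hs ⊢
      have hid : v t - nystU' a b w μ (n*p) κ φ v t =
          (v t - modU' a b w μ q n (n * p) κ φ v t) +
          (modU' a b w μ q n (n * p) κ φ v t - nystU' a b w μ (n*p) κ φ v t) := by ring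
      rw [hid]
      exact le_trans (abs_add_le _ _) (add_le_add hs he)
    have h3 := hnorm (n * p) hm₁ v hv
    have hC₇' : C₇ ≠ 0 := ne_of_gt hC₇
    have h4 : C₇ * (1 / (2 * C₇)) = 1 / 2 := by
      rw [one_div, mul_inv, ← mul_assoc, mul_comm C₇, mul_assoc,
        mul_inv_cancel₀ hC₇', mul_one, one_div]
    have h5 : Vv ≤ C₇ * (s₁ + (1 / (2 * C₇)) * Vv) := by
      refine le_trans h3 (mul_le_mul_of_nonneg_left h2 hC₇.le)
    have h6 : C₇ * (s₁ + (1 / (2 * C₇)) * Vv) = C₇ * s₁ + C₇ * (1 / (2 * C₇)) * Vv := by ring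
    rw [h6, h4] at h5
    linarith
  refine ⟨?_, key⟩
  -- existence and uniqueness via finite-dimensional linear algebra
  intro g hg
  set S : Finset ℝ :=
    (Finset.univ.image fun x : Fin (n*p) × Fin ρ => qNode a b μ (n*p) x.1 x.2) ∪
    (Finset.univ.image fun x : Fin n × Fin r => cNode a b q n x.1 x.2) with hSdef
  have hqS : ∀ j < n*p, ∀ i, qNode a b μ (n*p) j i ∈ S := fun j hj i =>
    Finset.mem_union_left _ (Finset.mem_image.2 ⟨(⟨j, hj⟩, i), Finset.mem_univ _, rfl⟩)
  have hcS : ∀ k < n, ∀ i, cNode a b q n k i ∈ S := fun k hk i =>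
    Finset.mem_union_right _ (Finset.mem_image.2 ⟨(⟨k, hk⟩, i), Finset.mem_univ _, rfl⟩)
  have hSIcc : ∀ t ∈ S, t ∈ Set.Icc a b := by
    intro t htS
    rcases Finset.mem_union.1 htS with h' | h' <;> obtain ⟨x, -, rfl⟩ := Finset.mem_image.1 h'
    · exact qNode_mem hab hμ x.1.2 x.2
    · exact cNode_mem hab hqIoo hn1 x.1.2 x.2
  set ext : (↥S → ℝ) → ℝ → ℝ := fun y t => if h' : t ∈ S then y ⟨t, h'⟩ else 0 with hextdef
  have ext_mem : ∀ (y : ↥S → ℝ) (t : ℝ) (h' : t ∈ S), ext y t = y ⟨t, h'⟩ :=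
    fun y t h' => dif_pos h'
  have ext_add : ∀ y₁ y₂, ext (y₁ + y₂) = ext y₁ + ext y₂ := by
    intro y₁ y₂; funext t
    simp only [hextdef, Pi.add_apply]
    split <;> simp
  have ext_smul : ∀ (c' : ℝ) y, ext (c' • y) = c' • ext y := by
    intro c' y; funext t
    simp only [hextdef, Pi.smul_apply, smul_eq_mul]
    split <;> simp
  have ext_bdd : ∀ y, BddIcc a b (ext y) := by
    intro y
    refine ⟨∑ s : ↥S, |y s|, fun t ht => ?_⟩
    by_cases h' : t ∈ S
    · rw [ext_mem y t h']
      exact Finset.single_le_sum (f := fun s : ↥S => |y s|) (fun s _ => abs_nonneg _)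
        (Finset.mem_univ (⟨t, h'⟩ : ↥S))
    · simp only [hextdef, dif_neg h', abs_zero]
      exact Finset.sum_nonneg fun s _ => abs_nonneg _
  have hread : ∀ v₁ v₂ : ℝ → ℝ, (∀ t ∈ S, v₁ t = v₂ t) →
      modU' a b w μ q n (n*p) κ φ v₁ = modU' a b w μ q n (n*p) κ φ v₂ := by
    intro v₁ v₂ hagree
    exact modU'_congr hn1 (fun j hj i => hagree _ (hqS j hj i))
      (fun k hk i => hagree _ (hcS k hk i))
  set Amap : (↥S → ℝ) →ₗ[ℝ] (↥S → ℝ) :=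
    { toFun := fun y s => modU' a b w μ q n (n*p) κ φ (ext y) s.1
      map_add' := fun y₁ y₂ => by
        funext s
        show modU' a b w μ q n (n*p) κ φ (ext (y₁ + y₂)) s.1 = _
        rw [ext_add, modU'_add]
        rfl
      map_smul' := fun c' y => by
        funext s
        show modU' a b w μ q n (n*p) κ φ (ext (c' • y)) s.1 = _
        rw [ext_smul, modU'_smul]
        rfl } with hAdef
  have hAapp : ∀ (y : ↥S → ℝ) (s : ↥S), Amap y s = modU' a b w μ q n (n*p) κ φ (ext y) s.1 :=
    fun y s => rfl
  set endo := (LinearMap.id : (↥S → ℝ) →ₗ[ℝ] (↥S → ℝ)) - Amap with hendodef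
  have hendoapp : ∀ (y : ↥S → ℝ) (s : ↥S), endo y s = y s - Amap y s := fun y s => rfl
  have hker : ∀ y, endo y = 0 → y = 0 := by
    intro y hy0
    have hyA : ∀ s, y s = Amap y s := by
      intro s
      have := congrFun hy0 s
      rw [hendoapp] at this
      simp only [Pi.zero_apply] at this
      linarith
    set v := modU' a b w μ q n (n*p) κ φ (ext y) with hvdef
    have hagree : ∀ t ∈ S, v t = ext y t := by
      intro t htS
      rw [ext_mem y t htS]
      exact (hyA ⟨t, htS⟩).symm
    have hfix : modU' a b w μ q n (n*p) κ φ v = v := (hread v (ext y) hagree).trans hvdef.symm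
    have hvb : BddIcc a b v := BddIcc_modU' hab w μ hqIoo hn1 h1 φ (ext y)
    have h0 : v - modU' a b w μ q n (n*p) κ φ v = (0 : ℝ → ℝ) := by rw [hfix, sub_self]
    have hk' := key v hvb
    rw [h0, supIcc_zero hab', mul_zero] at hk'
    have hvIcc : ∀ t ∈ Set.Icc a b, v t = 0 := by
      intro t ht
      have h' := le_supIcc hvb ht
      have h'' := abs_nonneg (v t)
      exact abs_eq_zero.1 (le_antisymm (h'.trans hk') h'')
    funext s
    have hs0 := hvIcc s.1 (hSIcc s.1 s.2)
    have : y s = v s.1 := by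
      rw [hagree s.1 s.2, ext_mem y s.1 s.2]
    rw [this, hs0]; rfl
  have hinj : Function.Injective endo := by
    intro y₁ y₂ hyy
    have := hker (y₁ - y₂) (by rw [map_sub, hyy, sub_self])
    exact sub_eq_zero.1 this
  have hsurj : Function.Surjective endo := LinearMap.injective_iff_surjective.1 hinj
  obtain ⟨y, hy⟩ := hsurj (fun s : ↥S => g s.1)
  have hyA : ∀ s : ↥S, y s - Amap y s = g s.1 := by
    intro s
    have := congrFun hy s
    rw [hendoapp] at this
    exact this
  set v := g + modU' a b w μ q n (n*p) κ φ (ext y) with hvdef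
  have hagree : ∀ t ∈ S, v t = ext y t := by
    intro t htS
    have h' := hyA ⟨t, htS⟩
    rw [hAapp] at h'
    rw [ext_mem y t htS]
    simp only [hvdef, Pi.add_apply]
    linarith
  have hMod : modU' a b w μ q n (n*p) κ φ v = modU' a b w μ q n (n*p) κ φ (ext y) :=
    hread v (ext y) hagree
  have hveq : v - modU' a b w μ q n (n*p) κ φ v = g := by
    rw [hMod]
    funext t
    simp only [hvdef, Pi.sub_apply, Pi.add_apply]
    ring
  have hvb : BddIcc a b v := hg.add (BddIcc_modU' hab w μ hqIoo hn1 h1 φ (ext y))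
  refine ⟨v, ⟨hvb, hveq⟩, ?_⟩
  rintro v' ⟨hv'b, hv'eq⟩
  have hw : v' - v - modU' a b w μ q n (n*p) κ φ (v' - v) = (0 : ℝ → ℝ) := by
    rw [modU'_sub]
    funext t
    have h₁ := congrFun hv'eq t
    have h₂ := congrFun hveq t
    simp only [Pi.sub_apply] at h₁ h₂ ⊢
    simp only [Pi.zero_apply]
    linarith
  have hwb : BddIcc a b (v' - v) := hv'b.sub hvb
  have hk' := key _ hwb
  rw [hw, supIcc_zero hab', mul_zero] at hk'
  have hIcc0 : ∀ t ∈ Set.Icc a b, (v' - v) t = 0 := by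
    intro t ht
    have h' := le_supIcc hwb ht
    exact abs_eq_zero.1 (le_antisymm (h'.trans hk') (abs_nonneg _))
  have hMod0 : modU' a b w μ q n (n*p) κ φ (v' - v) = modU' a b w μ q n (n*p) κ φ (0:ℝ→ℝ) :=
    hread _ _ (fun t ht => by rw [hIcc0 t (hSIcc t ht)]; rfl)
  rw [modU'_zero] at hMod0
  funext t
  have h₁ := congrFun hw t
  have h₂ := congrFun hMod0 t
  simp only [Pi.sub_apply, Pi.zero_apply] at h₁ h₂
  linarith

end
end
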